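/- Let s ≥ 0 be a real number and let F(X) = Σ_{n≥0} a_n X^n be a formal power series with complex coefficients such that a_0 ≠ 0 and F is Gevrey-s. Then the multiplicative inverse G = F^{−1} in ℂ[[X]] (the unique power series with F·G = 1) is Gevrey-s; that is, there exists a constant D > 0 such that the coefficients b_n of G satisfy |b_n| ≤ D^n·(n!)^s for all n ≥ 1. -/

import Mathlib

/-- The multiplicative inverse of a Gevrey-s power series with nonzero constant
term is Gevrey-s. -/
theorem gevrey_inv (s : ℝ) (hs : 0 ≤ s) (F G : PowerSeries ℂ)
    (h0 : PowerSeries.coeff 0 F ≠ 0)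
    (hF : ∃ C : ℝ, 0 < C ∧ ∀ n : ℕ, 1 ≤ n →
      ‖PowerSeries.coeff n F‖ ≤ C ^ n * (n.factorial : ℝ) ^ s)
    (hFG : F * G = 1) :
    ∃ D : ℝ, 0 < D ∧ ∀ n : ℕ, 1 ≤ n →
      ‖PowerSeries.coeff n G‖ ≤ D ^ n * (n.factorial : ℝ) ^ s := by
  obtain ⟨C, hC, hFb⟩ := hF
  set a : ℕ → ℂ := fun n => PowerSeries.coeff n F with ha
  set b : ℕ → ℂ := fun n => PowerSeries.coeff n G with hb
  have hApos : 0 < ‖a 0‖ := by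
    simpa [ha] using (norm_pos_iff.mpr h0)
  set A : ℝ := ‖a 0‖ with hA
  set ε : ℝ := min A 1 / 2 with hε
  have hεpos : 0 < ε := by
    have : 0 < min A 1 := lt_min hApos one_pos
    positivity
  have hεhalf : ε ≤ 1 / 2 := by
    have : min A 1 ≤ 1 := min_le_right _ _
    simp only [hε]; linarith
  have hεA : 2 * ε ≤ A := by
    have : min A 1 ≤ A := min_le_left _ _
    simp only [hε]; linarith
  set D : ℝ := C / ε with hD
  have hDpos : 0 < D := div_pos hC hεpos
  have hCD : C = ε * D := by rw [hD]; field_simp [hεpos.ne']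
  set K : ℝ := max 1 ‖b 0‖ with hK
  have hK1 : 1 ≤ K := le_max_left _ _
  have hKpos : 0 < K := lt_of_lt_of_le one_pos hK1
  -- recursion from F * G = 1
  have hrec : ∀ n : ℕ, 1 ≤ n →
      a 0 * b n = - ∑ k ∈ Finset.range n, a (k + 1) * b (n - (k + 1)) := by
    intro n hn
    have h := congrArg (PowerSeries.coeff n) hFG
    rw [PowerSeries.coeff_mul, PowerSeries.coeff_one,
      Finset.Nat.sum_antidiagonal_eq_sum_range_succ_mk,
      Finset.sum_range_succ'] at h
    have hn0 : n ≠ 0 := by omega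
    simp only [hn0, if_false, Nat.sub_zero] at h
    linear_combination h
  -- geometric estimate
  have hgeo : ∀ n : ℕ, ∑ k ∈ Finset.range n, ε ^ (k + 1) ≤ A := by
    intro n
    have h2 : ∑ k ∈ Finset.range n, ((1 : ℝ) / 2) ^ k ≤ 2 := sum_geometric_two_le n
    calc ∑ k ∈ Finset.range n, ε ^ (k + 1)
        ≤ ∑ k ∈ Finset.range n, ε * ((1 : ℝ) / 2) ^ k := by
          apply Finset.sum_le_sum
          intro k _
          rw [pow_succ']
          exact mul_le_mul_of_nonneg_left
            (pow_le_pow_left₀ hεpos.le hεhalf k) hεpos.le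
      _ = ε * ∑ k ∈ Finset.range n, ((1 : ℝ) / 2) ^ k := by rw [Finset.mul_sum]
      _ ≤ ε * 2 := mul_le_mul_of_nonneg_left h2 hεpos.le
      _ ≤ A := by linarith
  -- key bound by strong induction
  have key : ∀ n : ℕ, ‖b n‖ ≤ K * D ^ n * (n.factorial : ℝ) ^ s := by
    intro n
    induction n using Nat.strong_induction_on with
    | _ n ih =>
      match n with
      | 0 =>
        simp only [pow_zero, Nat.factorial_zero, Nat.cast_one, Real.one_rpow, mul_one]
        exact le_max_right _ _
      | Nat.succ m =>
        have hrec' := hrec (m + 1) (by omega)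
        have hterm : ∀ k ∈ Finset.range (m + 1),
            ‖a (k + 1) * b (m + 1 - (k + 1))‖ ≤
              ε ^ (k + 1) * (K * D ^ (m + 1) * (((m + 1).factorial : ℝ)) ^ s) := by
          intro k hk
          rw [Finset.mem_range] at hk
          have hkm : k ≤ m := by omega
          have hsub : m + 1 - (k + 1) = m - k := by omega
          rw [norm_mul, hsub]
          have h1 : ‖a (k + 1)‖ ≤ C ^ (k + 1) * ((k + 1).factorial : ℝ) ^ s :=
            hFb (k + 1) (by omega)
          have h2 : ‖b (m - k)‖ ≤ K * D ^ (m - k) * ((m - k).factorial : ℝ) ^ s :=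
            ih (m - k) (by omega)
          have hfacN : (k + 1).factorial * (m - k).factorial ≤ (m + 1).factorial := by
            have hd := Nat.factorial_mul_factorial_dvd_factorial_add (k + 1) (m - k)
            have he : k + 1 + (m - k) = m + 1 := by omega
            rw [he] at hd
            exact Nat.le_of_dvd (Nat.factorial_pos _) hd
          have hfac : ((k + 1).factorial : ℝ) ^ s * ((m - k).factorial : ℝ) ^ s ≤
              ((m + 1).factorial : ℝ) ^ s := by
            rw [← Real.mul_rpow (by positivity) (by positivity)]
            apply Real.rpow_le_rpow (by positivity) _ hs
            exact_mod_cast hfacN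
          have hDD : D ^ (k + 1) * D ^ (m - k) = D ^ (m + 1) := by
            rw [← pow_add]; congr 1; omega
          calc ‖a (k + 1)‖ * ‖b (m - k)‖
              ≤ (C ^ (k + 1) * ((k + 1).factorial : ℝ) ^ s) *
                (K * D ^ (m - k) * ((m - k).factorial : ℝ) ^ s) := by
                apply mul_le_mul h1 h2 (norm_nonneg _)
                positivity
            _ = (C ^ (k + 1) * D ^ (m - k)) * K *
                (((k + 1).factorial : ℝ) ^ s * ((m - k).factorial : ℝ) ^ s) := by ring
            _ ≤ (C ^ (k + 1) * D ^ (m - k)) * K * ((m + 1).factorial : ℝ) ^ s := by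
                apply mul_le_mul_of_nonneg_left hfac
                rw [hCD]; positivity
            _ = ε ^ (k + 1) * (K * (D ^ (k + 1) * D ^ (m - k)) *
                ((m + 1).factorial : ℝ) ^ s) := by rw [hCD, mul_pow]; ring
            _ = ε ^ (k + 1) * (K * D ^ (m + 1) * ((m + 1).factorial : ℝ) ^ s) := by
                rw [hDD]
        have hAeq : A * ‖b (m + 1)‖ =
            ‖∑ k ∈ Finset.range (m + 1), a (k + 1) * b (m + 1 - (k + 1))‖ := by
          rw [hA, ← norm_mul, hrec', norm_neg]
        have hAineq : A * ‖b (m + 1)‖ ≤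
            A * (K * D ^ (m + 1) * ((m + 1).factorial : ℝ) ^ s) := by
          rw [hAeq]
          calc ‖∑ k ∈ Finset.range (m + 1), a (k + 1) * b (m + 1 - (k + 1))‖
              ≤ ∑ k ∈ Finset.range (m + 1),
                ‖a (k + 1) * b (m + 1 - (k + 1))‖ :=
                norm_sum_le _ _
            _ ≤ ∑ k ∈ Finset.range (m + 1),
                ε ^ (k + 1) * (K * D ^ (m + 1) * ((m + 1).factorial : ℝ) ^ s) :=
                Finset.sum_le_sum hterm
            _ = (∑ k ∈ Finset.range (m + 1), ε ^ (k + 1)) *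
                (K * D ^ (m + 1) * ((m + 1).factorial : ℝ) ^ s) := by
                rw [← Finset.sum_mul]
            _ ≤ A * (K * D ^ (m + 1) * ((m + 1).factorial : ℝ) ^ s) := by
                apply mul_le_mul_of_nonneg_right (hgeo _)
                positivity
        exact le_of_mul_le_mul_left hAineq hApos
  refine ⟨K * D, by positivity, fun n hn => ?_⟩
  calc ‖b n‖ ≤ K * D ^ n * (n.factorial : ℝ) ^ s := key n
    _ ≤ (K * D) ^ n * (n.factorial : ℝ) ^ s := by
        rw [mul_pow]
        apply mul_le_mul_of_nonneg_right _ (by positivity)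
        exact mul_le_mul_of_nonneg_right (le_self_pow₀ hK1 (by omega))
          (pow_nonneg hDpos.le n)
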